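/- If A is a weak B_k-set (B_k*-set), then S_k ≤ k^2 · |A| · S_{k-1}, where S_j counts solutions to x_1+...+x_j = y_1+...+y_j in A^{2j} with the x_i pairwise distinct and the y_i pairwise distinct. -/

import Mathlib

open Finset

open scoped Classical in
/-- `M_k(A)`: number of solutions of `x₁+⋯+x_k = y₁+⋯+y_k` in `A^{2k}`. -/
noncomputable def Mcount (k : ℕ) (A : Finset ℤ) : ℕ :=
  (((Fintype.piFinset fun _ : Fin k => A) ×ˢ (Fintype.piFinset fun _ : Fin k => A)).filter
    (fun p => (∑ i, p.1 i) = ∑ i, p.2 i)).card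

open scoped Classical in
/-- `S_k(A)`: solutions with the `x_i` pairwise distinct and the `y_i` pairwise distinct. -/
noncomputable def Scount (k : ℕ) (A : Finset ℤ) : ℕ :=
  (((Fintype.piFinset fun _ : Fin k => A) ×ˢ (Fintype.piFinset fun _ : Fin k => A)).filter
    (fun p => (∑ i, p.1 i) = (∑ i, p.2 i) ∧ Function.Injective p.1 ∧ Function.Injective p.2)).card

open scoped Classical in
/-- `S_k^*(A₁, A₂)`: solutions with `x ∈ A₁^k`, `y ∈ A₂^k` and all `2k` entries pairwise distinct. -/
noncomputable def Sstar2 (k : ℕ) (A₁ A₂ : Finset ℤ) : ℕ :=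
  (((Fintype.piFinset fun _ : Fin k => A₁) ×ˢ (Fintype.piFinset fun _ : Fin k => A₂)).filter
    (fun p => (∑ i, p.1 i) = (∑ i, p.2 i) ∧ Function.Injective p.1 ∧ Function.Injective p.2 ∧
      ∀ i j, p.1 i ≠ p.2 j)).card

/-- `S_k^*(A)`. -/
noncomputable def Sstar (k : ℕ) (A : Finset ℤ) : ℕ := Sstar2 k A A

/-- `A` is a weak `B_k`-set (`B_k^*`-set): there is no solution of
`x₁+⋯+x_k = y₁+⋯+y_k` with all `2k` elements of `A` pairwise distinct. -/
def IsWeakBkSet (k : ℕ) (A : Finset ℤ) : Prop :=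
  ∀ x y : Fin k → ℤ, (∀ i, x i ∈ A) → (∀ i, y i ∈ A) →
    (∑ i, x i) = (∑ i, y i) → Function.Injective x → Function.Injective y →
      ∃ i j, x i = y j

theorem Sk_le_Skm1 (k : ℕ) (hk : 1 ≤ k) (A : Finset ℤ) (hA : IsWeakBkSet k A) :
    Scount k A ≤ k ^ 2 * A.card * Scount (k - 1) A := by
  classical
  obtain ⟨m, rfl⟩ : ∃ m, k = m + 1 := ⟨k - 1, (Nat.succ_pred_eq_of_pos hk).symm⟩
  set k := m + 1
  set S : Finset ((Fin k → ℤ) × (Fin k → ℤ)) :=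
    (((Fintype.piFinset fun _ : Fin k => A) ×ˢ (Fintype.piFinset fun _ : Fin k => A)).filter
      (fun p => (∑ i, p.1 i) = (∑ i, p.2 i) ∧ Function.Injective p.1 ∧ Function.Injective p.2))
    with hS
  set S' : Finset ((Fin m → ℤ) × (Fin m → ℤ)) :=
    (((Fintype.piFinset fun _ : Fin m => A) ×ˢ (Fintype.piFinset fun _ : Fin m => A)).filter
      (fun p => (∑ i, p.1 i) = (∑ i, p.2 i) ∧ Function.Injective p.1 ∧ Function.Injective p.2))
    with hS'
  have key : S.card ≤ (((univ : Finset (Fin k × Fin k)) ×ˢ A) ×ˢ S').card := by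
    -- for each solution, pick indices where x i = y j
    have hch : ∀ p ∈ S, ∃ ij : Fin k × Fin k, p.1 ij.1 = p.2 ij.2 := by
      intro p hp
      simp only [hS, mem_filter, mem_product, Fintype.mem_piFinset] at hp
      obtain ⟨⟨h1, h2⟩, hsum, hx, hy⟩ := hp
      obtain ⟨i, j, hij⟩ := hA p.1 p.2 h1 h2 hsum hx hy
      exact ⟨(i, j), hij⟩
    set c : ((Fin k → ℤ) × (Fin k → ℤ)) → (Fin k × Fin k) :=
      fun p => if hp : p ∈ S then Classical.choose (hch p hp) else default with hc
    have hcspec : ∀ p, p ∈ S → p.1 (c p).1 = p.2 (c p).2 := by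
      intro p hp
      simp only [hc, dif_pos hp]
      exact Classical.choose_spec (hch p hp)
    set F : ((Fin k → ℤ) × (Fin k → ℤ)) → ((Fin k × Fin k) × ℤ) × ((Fin m → ℤ) × (Fin m → ℤ)) :=
      fun p => ((c p, p.1 (c p).1), ((c p).1.removeNth p.1, (c p).2.removeNth p.2))
    apply Finset.card_le_card_of_injOn F
    · intro p hp
      simp only [F]
      have hspec := hcspec p hp
      set ij := c p with hij
      simp only [hS, mem_coe, mem_filter, mem_product, Fintype.mem_piFinset] at hp
      obtain ⟨⟨h1, h2⟩, hsum, hx, hy⟩ := hp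
      simp only [mem_coe, mem_product, mem_univ, true_and, hS', mem_filter, Fintype.mem_piFinset]
      refine ⟨h1 _, ⟨fun i => h1 _, fun i => h2 _⟩, ?_, ?_, ?_⟩
      · have e1 := Fin.sum_univ_succAbove p.1 ij.1
        have e2 := Fin.sum_univ_succAbove p.2 ij.2
        rw [e1, e2, hspec] at hsum
        simpa [Fin.removeNth] using add_left_cancel hsum
      · exact hx.comp (Fin.succAbove_right_injective)
      · exact hy.comp (Fin.succAbove_right_injective)
    · intro p hp q hq hpq
      simp only [F, Prod.mk.injEq] at hpq
      have hps := hcspec p hp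
      have hqs := hcspec q hq
      obtain ⟨⟨hij, ha⟩, hr1, hr2⟩ := hpq
      rw [← hij] at hr1 hr2 hqs ha
      set ij := c p
      have e1 : p.1 = q.1 := by
        rw [← Fin.insertNth_self_removeNth ij.1 p.1, ← Fin.insertNth_self_removeNth ij.1 q.1,
          hr1, ha]
      have e2 : p.2 = q.2 := by
        rw [← Fin.insertNth_self_removeNth ij.2 p.2, ← Fin.insertNth_self_removeNth ij.2 q.2,
          hr2, ← hps, ha, hqs]
      exact Prod.ext e1 e2
  calc Scount k A = S.card := by
        rw [hS, Scount]
      _ ≤ (((univ : Finset (Fin k × Fin k)) ×ˢ A) ×ˢ S').card := key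
      _ = k ^ 2 * A.card * Scount (k - 1) A := by
        rw [card_product, card_product]
        simp [Scount, hS', sq, k, mul_assoc]
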